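/- Let 0 ≤ θ < π/2 and let A be an n×n complex matrix in the sector class S_θ. Then ℜ(A⁻¹) ≤ (ℜA)⁻¹ ≤ sec²θ · ℜ(A⁻¹) in the Loewner order. (In particular ℜ(A⁻¹) is positive definite, so all three matrices are Hermitian and the inequalities compare positive definite matrices.) -/

import Mathlib

open Matrix
open scoped ComplexOrder

/-- The real part `(A + Aᴴ)/2` of a complex matrix. -/
noncomputable def matRe {n : ℕ} (A : Matrix (Fin n) (Fin n) ℂ) : Matrix (Fin n) (Fin n) ℂ :=
  (2⁻¹ : ℂ) • (A + Aᴴ)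

/-- The imaginary part `(A - Aᴴ)/(2i)` of a complex matrix. -/
noncomputable def matIm {n : ℕ} (A : Matrix (Fin n) (Fin n) ℂ) : Matrix (Fin n) (Fin n) ℂ :=
  (2 * Complex.I)⁻¹ • (A - Aᴴ)

/-- Loewner order: `Y - X` is positive semidefinite. -/
def loewnerLE {n : ℕ} (X Y : Matrix (Fin n) (Fin n) ℂ) : Prop := (Y - X).PosSemidef

/-- `A` lies in the sector class `S_θ`: its real part is positive definite and for all `x`,
`|⟨(ℑA)x, x⟩| ≤ tan θ · ⟨(ℜA)x, x⟩`. -/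
def sectorClass {n : ℕ} (θ : ℝ) (A : Matrix (Fin n) (Fin n) ℂ) : Prop :=
  (matRe A).PosDef ∧
    ∀ x : Fin n → ℂ,
      |(star x ⬝ᵥ (matIm A).mulVec x).re| ≤ Real.tan θ * (star x ⬝ᵥ (matRe A).mulVec x).re

/-- The `v`-weighted arithmetic mean `A ∇_v B = v A + (1 - v) B`. -/
noncomputable def amean {n : ℕ} (v : ℝ) (A B : Matrix (Fin n) (Fin n) ℂ) :
    Matrix (Fin n) (Fin n) ℂ :=
  (v : ℂ) • A + ((1 - v : ℝ) : ℂ) • B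

/-- The `v`-weighted harmonic mean `A !_v B = (v A⁻¹ + (1 - v) B⁻¹)⁻¹`. -/
noncomputable def hmean {n : ℕ} (v : ℝ) (A B : Matrix (Fin n) (Fin n) ℂ) :
    Matrix (Fin n) (Fin n) ℂ :=
  ((v : ℂ) • A⁻¹ + ((1 - v : ℝ) : ℂ) • B⁻¹)⁻¹

/-- A linear map on matrices is positive and unital. -/
def IsPosUnitalMap {n : ℕ}
    (Φ : Matrix (Fin n) (Fin n) ℂ →ₗ[ℂ] Matrix (Fin n) (Fin n) ℂ) : Prop :=
  Φ 1 = 1 ∧ ∀ X : Matrix (Fin n) (Fin n) ℂ, X.PosSemidef → (Φ X).PosSemidef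

/-- The numerical radius `ω(A) = sup { |⟨Ax, x⟩| : ‖x‖ = 1 }` (ℓ² norm). -/
noncomputable def numRadius {n : ℕ} (A : Matrix (Fin n) (Fin n) ℂ) : ℝ :=
  sSup {r : ℝ | ∃ x : EuclideanSpace ℂ (Fin n), ‖x‖ = 1 ∧
    r = ‖star (x : Fin n → ℂ) ⬝ᵥ A.mulVec (x : Fin n → ℂ)‖}

/-- The spectral norm (ℓ² → ℓ² operator norm) of a matrix. -/
noncomputable def matSpectralNorm {n : ℕ} (A : Matrix (Fin n) (Fin n) ℂ) : ℝ :=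
  ‖Matrix.toEuclideanCLM (𝕜 := ℂ) A‖

section Stmt18Aux

open Matrix Complex
open scoped ComplexOrder

variable {n : ℕ}

private lemma quad_conjT (M : Matrix (Fin n) (Fin n) ℂ) (x : Fin n → ℂ) :
    star x ⬝ᵥ Mᴴ *ᵥ x = star (star x ⬝ᵥ M *ᵥ x) := by
  rw [dotProduct_mulVec, ← star_mulVec, star_dotProduct]

private lemma quad_im_eq_zero {M : Matrix (Fin n) (Fin n) ℂ} (hM : M.IsHermitian)
    (x : Fin n → ℂ) : (star x ⬝ᵥ M *ᵥ x).im = 0 := by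
  have h := quad_conjT M x
  rw [hM.eq] at h
  have := congrArg Complex.im h
  simp at this
  linarith

private lemma quad_expand (M : Matrix (Fin n) (Fin n) ℂ) (x y : Fin n → ℂ) (c : ℂ) :
    star (x + c • y) ⬝ᵥ M *ᵥ (x + c • y)
      = star x ⬝ᵥ M *ᵥ x + c * (star x ⬝ᵥ M *ᵥ y) + star c * (star y ⬝ᵥ M *ᵥ x)
        + (star c * c) * (star y ⬝ᵥ M *ᵥ y) := by
  simp only [star_add, star_smul, mulVec_add, mulVec_smul, dotProduct_add, add_dotProduct,
    smul_dotProduct, dotProduct_smul, smul_eq_mul]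
  ring

private lemma quad_expand_re (M : Matrix (Fin n) (Fin n) ℂ) (x y : Fin n → ℂ) (l : ℝ) :
    (star (x + (l : ℂ) • y) ⬝ᵥ M *ᵥ (x + (l : ℂ) • y)).re
      = (star x ⬝ᵥ M *ᵥ x).re + l * ((star x ⬝ᵥ M *ᵥ y).re + (star y ⬝ᵥ M *ᵥ x).re)
        + l ^ 2 * (star y ⬝ᵥ M *ᵥ y).re := by
  rw [quad_expand]
  have hst : star ((l : ℂ)) = (l : ℂ) := by simp
  rw [hst]
  simp only [Complex.add_re, Complex.re_ofReal_mul, mul_assoc]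
  ring

private lemma vecS_dot {S : Matrix (Fin n) (Fin n) ℂ} (hS : S.IsHermitian) (x w : Fin n → ℂ) :
    star x ⬝ᵥ S *ᵥ w = star (S *ᵥ x) ⬝ᵥ w := by
  rw [dotProduct_mulVec, star_mulVec, hS.eq]

private lemma matRe_isHermitian (A : Matrix (Fin n) (Fin n) ℂ) : (matRe A).IsHermitian := by
  unfold Matrix.IsHermitian matRe
  rw [conjTranspose_smul, conjTranspose_add, conjTranspose_conjTranspose]
  simp [add_comm]

private lemma matIm_isHermitian (A : Matrix (Fin n) (Fin n) ℂ) : (matIm A).IsHermitian := by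
  unfold Matrix.IsHermitian matIm
  rw [conjTranspose_smul, conjTranspose_sub, conjTranspose_conjTranspose]
  have : star ((2 * Complex.I)⁻¹) = -(2 * Complex.I)⁻¹ := by
    simp [star_inv₀]
  rw [this]
  module

private lemma matRe_decomp (A : Matrix (Fin n) (Fin n) ℂ) :
    A = matRe A + Complex.I • matIm A := by
  unfold matRe matIm
  rw [smul_smul, show Complex.I * (2 * Complex.I)⁻¹ = 2⁻¹ by field_simp]
  module

private lemma conjT_decomp (A : Matrix (Fin n) (Fin n) ℂ) :
    Aᴴ = matRe A - Complex.I • matIm A := by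
  unfold matRe matIm
  rw [smul_smul, show Complex.I * (2 * Complex.I)⁻¹ = 2⁻¹ by field_simp]
  module

private lemma isUnit_of_posDef_re {A : Matrix (Fin n) (Fin n) ℂ} (h : (matRe A).PosDef) :
    IsUnit A := by
  rw [← Matrix.mulVec_injective_iff_isUnit]
  have hker : ∀ x, A *ᵥ x = 0 → x = 0 := by
    intro x hx
    by_contra hx0
    have h1 : star x ⬝ᵥ A *ᵥ x = 0 := by rw [hx]; simp
    have h2 : star x ⬝ᵥ Aᴴ *ᵥ x = 0 := by rw [quad_conjT, h1]; simp
    have h3 : star x ⬝ᵥ (matRe A) *ᵥ x = 0 := by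
      unfold matRe
      rw [smul_mulVec, dotProduct_smul, add_mulVec, dotProduct_add, h1, h2]
      simp
    have := h.dotProduct_mulVec_pos hx0
    rw [h3] at this
    exact lt_irrefl _ this
  intro x y hxy
  have h0 : A *ᵥ (x - y) = 0 := by rw [mulVec_sub, hxy, sub_self]
  exact sub_eq_zero.mp (hker _ h0)

private lemma scalar_key {t p q : ℝ} (hp0 : 0 ≤ p) (hq0 : 0 ≤ q) (hpq : 0 < q → 0 < p)
    (hineq : ∀ l : ℝ, 2 * l * q ≤ t * (p + l ^ 2 * q)) : q ≤ t ^ 2 * p := by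
  rcases eq_or_lt_of_le hq0 with hqz | hqpos
  · nlinarith [sq_nonneg t, hp0]
  · have hppos : 0 < p := hpq hqpos
    set l := Real.sqrt (p / q) with hl
    have hl0 : 0 ≤ l := Real.sqrt_nonneg _
    have hl2 : l ^ 2 * q = p := by
      rw [hl, Real.sq_sqrt (by positivity)]
      field_simp
    have hpp : p + l ^ 2 * q = 2 * p := by linarith [hl2]
    have h1 : l * q ≤ t * p := by
      have h := hineq l
      rw [hpp] at h
      linarith
    have h2 : p * q ≤ (t * p) * (t * p) := by
      nlinarith [mul_self_le_mul_self (by positivity : (0:ℝ) ≤ l * q) h1, hl2]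
    nlinarith [h2, hppos]

private lemma key_psd {R S : Matrix (Fin n) (Fin n) ℂ} (hR : R.PosDef) (hS : S.IsHermitian)
    {t : ℝ} (ht : ∀ x : Fin n → ℂ, |(star x ⬝ᵥ S *ᵥ x).re| ≤ t * (star x ⬝ᵥ R *ᵥ x).re) :
    (((t ^ 2 : ℝ) : ℂ) • R - S * R⁻¹ * S).PosSemidef := by
  have hRu : IsUnit R.det := hR.det_pos.ne'.isUnit
  have hSRS : (S * R⁻¹ * S).IsHermitian := by
    have := Matrix.isHermitian_conjTranspose_mul_mul S hR.inv.1
    rwa [hS.eq] at this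
  have hherm : (((t ^ 2 : ℝ) : ℂ) • R - S * R⁻¹ * S).IsHermitian := by
    unfold Matrix.IsHermitian
    rw [conjTranspose_sub, conjTranspose_smul, hSRS.eq, hR.1.eq]
    norm_num
  refine .of_dotProduct_mulVec_nonneg hherm (fun x => ?_)
  rw [Complex.le_def]
  constructor
  swap
  · simp only [quad_im_eq_zero hherm x, Complex.zero_im]
  · simp only [Complex.zero_re]
    set u := S *ᵥ x with hu
    set y := R⁻¹ *ᵥ u with hy
    set p := (star x ⬝ᵥ R *ᵥ x).re with hp
    set q := (star u ⬝ᵥ R⁻¹ *ᵥ u).re with hqdef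
    have hval : star x ⬝ᵥ (S * R⁻¹ * S) *ᵥ x = star u ⬝ᵥ R⁻¹ *ᵥ u := by
      rw [← mulVec_mulVec, ← mulVec_mulVec, vecS_dot hS]
    have hre : (star x ⬝ᵥ (((t ^ 2 : ℝ) : ℂ) • R - S * R⁻¹ * S) *ᵥ x).re = t ^ 2 * p - q := by
      rw [sub_mulVec, dotProduct_sub, smul_mulVec, dotProduct_smul, hval]
      simp only [smul_eq_mul, Complex.sub_re, Complex.re_ofReal_mul, hp, hqdef]
    rw [hre, sub_nonneg]
    have hp0 : 0 ≤ p := by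
      rcases eq_or_ne x 0 with rfl | hx0
      · simp [hp]
      · have := hR.dotProduct_mulVec_pos hx0
        rw [Complex.lt_def] at this
        exact le_of_lt (by simpa [hp] using this.1)
    have hq0 : 0 ≤ q := by
      have := hR.inv.posSemidef.dotProduct_mulVec_nonneg u
      rw [Complex.le_def] at this
      simpa [hqdef] using this.1
    have hRy : R *ᵥ y = u := by
      rw [hy, mulVec_mulVec, Matrix.mul_nonsing_inv _ hRu, one_mulVec]
    have hq_alt : (star y ⬝ᵥ u).re = q := by
      rw [star_dotProduct y u]
      simp only [Complex.star_def, Complex.conj_re]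
      rfl
    have hxSy : (star x ⬝ᵥ S *ᵥ y).re = q := by
      rw [vecS_dot hS]
    have hySx : (star y ⬝ᵥ S *ᵥ x).re = q := by
      rw [← hu, hq_alt]
    have hyRy : (star y ⬝ᵥ R *ᵥ y).re = q := by
      rw [hRy, hq_alt]
    have hineq : ∀ l : ℝ, 2 * l * q ≤ t * (p + l ^ 2 * q) := by
      intro l
      have h1 := ht (x + (l : ℂ) • y)
      have h2 := ht (x + (l : ℂ) • (-y))
      rw [quad_expand_re S x y l, quad_expand_re R x y l] at h1
      rw [quad_expand_re S x (-y) l, quad_expand_re R x (-y) l] at h2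
      simp only [mulVec_neg, dotProduct_neg, star_neg, neg_dotProduct, neg_neg,
        Complex.neg_re] at h2
      rw [hxSy, hySx, hyRy] at h1 h2
      have habs1 := (abs_le.mp h1).2
      have habs2 := (abs_le.mp h2).1
      nlinarith [habs1, habs2]
    refine scalar_key hp0 hq0 (fun hqpos => ?_) hineq
    have hx0 : x ≠ 0 := by
      rintro rfl
      rw [hqdef, hu] at hqpos
      simp at hqpos
    have := hR.dotProduct_mulVec_pos hx0
    rw [Complex.lt_def] at this
    simpa [hp] using this.1

private lemma E1 (A : Matrix (Fin n) (Fin n) ℂ) (hAu : IsUnit A.det)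
    (hAHu : IsUnit (Aᴴ).det) : matRe A⁻¹ = A⁻¹ * matRe A * Aᴴ⁻¹ := by
  have h1 : A⁻¹ * (A + Aᴴ) * Aᴴ⁻¹ = Aᴴ⁻¹ + A⁻¹ := by
    rw [mul_add, Matrix.nonsing_inv_mul _ hAu, add_mul, one_mul, mul_assoc,
      Matrix.mul_nonsing_inv _ hAHu, mul_one]
  unfold matRe
  rw [conjTranspose_nonsing_inv, mul_smul_comm, smul_mul_assoc, h1, add_comm]

private lemma E2 {A R S : Matrix (Fin n) (Fin n) ℂ} (h1 : A = R + Complex.I • S)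
    (h2 : Aᴴ = R - Complex.I • S) (hRu : IsUnit R.det) :
    A * R⁻¹ * Aᴴ = R + S * R⁻¹ * S := by
  rw [h2, h1]
  rw [add_mul, smul_mul_assoc, Matrix.mul_nonsing_inv _ hRu]
  rw [mul_sub, mul_smul_comm]
  rw [add_mul, one_mul, smul_mul_assoc, mul_assoc, Matrix.nonsing_inv_mul _ hRu, mul_one]
  rw [add_mul, one_mul, smul_mul_assoc]
  rw [smul_add, smul_smul, Complex.I_mul_I]
  module

end Stmt18Aux

theorem stmt18 {n : ℕ} (θ : ℝ) (hθ0 : 0 ≤ θ) (hθ1 : θ < Real.pi / 2)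
    (A : Matrix (Fin n) (Fin n) ℂ) (hA : sectorClass θ A) :
    loewnerLE (matRe A⁻¹) (matRe A)⁻¹ ∧
      loewnerLE ((matRe A)⁻¹) (((Real.cos θ)⁻¹ ^ 2) • matRe A⁻¹) := by
  obtain ⟨hR, hsec⟩ := hA
  have hRu : IsUnit (matRe A).det := hR.det_pos.ne'.isUnit
  have hAdet : IsUnit A.det := (Matrix.isUnit_iff_isUnit_det A).mp (isUnit_of_posDef_re hR)
  have hAHdet : IsUnit (Aᴴ).det := by
    rw [Matrix.det_conjTranspose]
    exact hAdet.star
  have hE1 := E1 A hAdet hAHdet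
  have hE2 := E2 (matRe_decomp A) (conjT_decomp A) hRu
  have hSRS : matIm A * (matRe A)⁻¹ * matIm A = A * (matRe A)⁻¹ * Aᴴ - matRe A := by
    rw [hE2, add_sub_cancel_left]
  have hcancel : A⁻¹ * (A * (matRe A)⁻¹ * Aᴴ) * Aᴴ⁻¹ = (matRe A)⁻¹ := by
    rw [show A⁻¹ * (A * (matRe A)⁻¹ * Aᴴ) * Aᴴ⁻¹
        = (A⁻¹ * A) * (matRe A)⁻¹ * (Aᴴ * Aᴴ⁻¹) by noncomm_ring,
      Matrix.nonsing_inv_mul _ hAdet, Matrix.mul_nonsing_inv _ hAHdet, one_mul, mul_one]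
  have G1 : A⁻¹ * (matIm A * (matRe A)⁻¹ * matIm A) * A⁻¹ᴴ
      = (matRe A)⁻¹ - matRe A⁻¹ := by
    rw [conjTranspose_nonsing_inv, hSRS, mul_sub, sub_mul, hcancel, ← hE1]
  have hinner : (matIm A * (matRe A)⁻¹ * matIm A).PosSemidef := by
    have := (hR.inv.posSemidef).conjTranspose_mul_mul_same (matIm A)
    rwa [(matIm_isHermitian A).eq] at this
  constructor
  · show ((matRe A)⁻¹ - matRe A⁻¹).PosSemidef
    rw [← G1]
    exact hinner.mul_mul_conjTranspose_same A⁻¹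
  · show (((Real.cos θ)⁻¹ ^ 2) • matRe A⁻¹ - (matRe A)⁻¹).PosSemidef
    have hcos : 0 < Real.cos θ := by
      apply Real.cos_pos_of_mem_Ioo
      constructor
      · linarith [Real.pi_pos]
      · exact hθ1
    have hc : (Real.cos θ)⁻¹ ^ 2 = Real.tan θ ^ 2 + 1 := by
      rw [inv_pow, ← Real.inv_one_add_tan_sq hcos.ne', inv_inv]
      ring
    have hkey : ((((Real.tan θ) ^ 2 : ℝ) : ℂ) • matRe A
        - matIm A * (matRe A)⁻¹ * matIm A).PosSemidef :=
      key_psd hR (matIm_isHermitian A) hsec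
    have hsm : ((Real.cos θ)⁻¹ ^ 2) • matRe A⁻¹
        = (((Real.tan θ ^ 2 + 1 : ℝ)) : ℂ) • matRe A⁻¹ := by
      rw [hc]
      ext i j
      simp [Complex.real_smul]
    have G2 : ((Real.cos θ)⁻¹ ^ 2) • matRe A⁻¹ - (matRe A)⁻¹
        = A⁻¹ * ((((Real.tan θ) ^ 2 : ℝ) : ℂ) • matRe A
          - matIm A * (matRe A)⁻¹ * matIm A) * A⁻¹ᴴ := by
      rw [mul_sub, sub_mul, G1, mul_smul_comm, smul_mul_assoc, conjTranspose_nonsing_inv,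
        ← hE1, hsm]
      push_cast
      module
    rw [G2]
    exact hkey.mul_mul_conjTranspose_same A⁻¹
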